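/- Let c > 0 and let p be a positive natural number. Let (w_i)_{i ∈ ℕ} be i.i.d. random vectors in ℝ^p, each standard Gaussian with scale c, and let (V_i)_{i ∈ ℕ} be i.i.d. real random variables, each with the Gaussian distribution of mean 0 and variance c², with the two families mutually independent. Then almost surely, (1/N) · Σ_{i=1}^{N} max(V_i, 0) · w_i converges to 0 as N → ∞. -/

import Mathlib

open MeasureTheory ProbabilityTheory Filter
open scoped RealInnerProductSpace NNReal ProbabilityTheory Topology

private lemma integrable_id_gaussianReal' {v : ℝ≥0} (hv : v ≠ 0) :
    Integrable (fun x : ℝ => x) (gaussianReal 0 v) := by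
  have hvpos : (0:ℝ) < (v:ℝ) := lt_of_le_of_ne v.coe_nonneg (by
    simpa [eq_comm] using hv)
  rw [gaussianReal_of_var_ne_zero _ hv,
    integrable_withDensity_iff (measurable_gaussianPDF _ _)
      (Eventually.of_forall fun x => ENNReal.ofReal_lt_top)]
  have hb : (0:ℝ) < (2 * (v:ℝ))⁻¹ := by positivity
  have h1 : (fun x : ℝ => x * (gaussianPDF 0 v x).toReal)
      = fun x : ℝ => (Real.sqrt (2 * Real.pi * v))⁻¹ *
        (x * Real.exp (-(2 * (v:ℝ))⁻¹ * x ^ 2)) := by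
    funext x
    rw [gaussianPDF, ENNReal.toReal_ofReal (gaussianPDFReal_nonneg _ _ _), gaussianPDFReal]
    have h2 : -(x - 0)^2 / (2 * (v:ℝ)) = -(2 * (v:ℝ))⁻¹ * x ^ 2 := by
      field_simp
      ring
    rw [h2]
    ring
  rw [h1]
  exact (integrable_mul_exp_neg_mul_sq hb).const_mul _

private lemma integral_id_gaussianReal' (v : ℝ≥0) :
    ∫ x, x ∂(gaussianReal 0 v) = 0 := by
  by_cases hv : v = 0
  · simp [hv]
  · have h1 : NNReal.mk ((-1:ℝ)^2) (sq_nonneg _) = 1 := by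
      ext; norm_num [NNReal.mk]; rfl
    have hmap : (gaussianReal 0 v).map (fun x => (-1:ℝ) * x) = gaussianReal 0 v := by
      rw [show (fun x => (-1:ℝ) * x) = ((-1:ℝ) * ·) from rfl, gaussianReal_map_const_mul, h1]
      norm_num
    have h2 : ∫ x, x ∂(gaussianReal 0 v) = ∫ x, (-1:ℝ) * x ∂(gaussianReal 0 v) := by
      conv_lhs => rw [← hmap]
      exact integral_map ((measurable_const_mul _).aemeasurable) aestronglyMeasurable_id
    have h3 : ∫ x, -x ∂(gaussianReal 0 v) = - ∫ x, x ∂(gaussianReal 0 v) :=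
      integral_neg (fun x => x)
    simp only [neg_mul, one_mul] at h2
    rw [h3] at h2
    linarith

private lemma iIndepFun_ae_congr {Ω ι : Type*} {mΩ : MeasurableSpace Ω} {μ : Measure Ω}
    {β : ι → Type*} [mβ : ∀ i, MeasurableSpace (β i)] {f g : ∀ i, Ω → β i}
    (h : ∀ i, f i =ᵐ[μ] g i) (hf : iIndepFun f μ) : iIndepFun g μ := by
  rw [iIndepFun_iff_measure_inter_preimage_eq_mul] at hf ⊢
  intro S sets hsets
  have hae : ∀ᵐ ω ∂μ, ∀ i ∈ S, f i ω = g i ω :=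
    (ae_ball_iff S.countable_toSet).2 fun i _ => h i
  have h1 : ((⋂ i ∈ S, g i ⁻¹' sets i) : Set Ω) =ᵐ[μ] (⋂ i ∈ S, f i ⁻¹' sets i) :=
    eventuallyEq_set.2 (by
      filter_upwards [hae] with ω hω
      simp only [Set.mem_iInter, Set.mem_preimage]
      exact forall₂_congr fun i hi => by rw [hω i hi])
  rw [measure_congr h1, hf S hsets]
  refine Finset.prod_congr rfl fun i hi => measure_congr ?_
  exact eventuallyEq_set.2 (by
    filter_upwards [h i] with ω hω
    simp only [Set.mem_preimage, hω])

/-- **LLN content of Theorem 2, DeconvNet without max-pooling.** For i.i.d.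
standard Gaussian (scale `c`) random vectors `w i` in `ℝ^p` and i.i.d. `N(0, c²)` variables
`V i`, all mutually independent (expressed as joint independence of all real coordinates),
almost surely `(1/N) ∑_{i<N} max (V i) 0 • w i → 0`. -/
theorem deconvnet_patch_lln {Ω : Type*} [MeasureSpace Ω]
    [IsProbabilityMeasure (ℙ : Measure Ω)]
    (c : ℝ) (hc : 0 < c) (p : ℕ) (hp : 0 < p)
    (w : ℕ → Ω → EuclideanSpace ℝ (Fin p)) (V : ℕ → Ω → ℝ)
    (hindep : iIndepFun
      (fun k : (ℕ × Fin p) ⊕ ℕ =>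
        Sum.elim (fun im : ℕ × Fin p => fun ω => w im.1 ω im.2) (fun i => V i) k) ℙ)
    (hw : ∀ i m, Measure.map (fun ω => w i ω m) ℙ = gaussianReal 0 ⟨c ^ 2, sq_nonneg c⟩)
    (hV : ∀ i, Measure.map (V i) ℙ = gaussianReal 0 ⟨c ^ 2, sq_nonneg c⟩) :
    ∀ᵐ ω ∂ℙ, Tendsto (fun N : ℕ =>
        (N : ℝ)⁻¹ • ∑ i ∈ Finset.range N, max (V i ω) 0 • w i ω)
      atTop (𝓝 (0 : EuclideanSpace ℝ (Fin p))) := by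
  classical
  set v : ℝ≥0 := ⟨c ^ 2, sq_nonneg c⟩ with hv_def
  have hv : v ≠ 0 := by
    rw [← NNReal.coe_ne_zero, hv_def]
    show c ^ 2 ≠ 0
    positivity
  set f : (ℕ × Fin p) ⊕ ℕ → Ω → ℝ :=
    fun k => Sum.elim (fun im : ℕ × Fin p => fun ω => w im.1 ω im.2) (fun i => V i) k
      with hf_def
  have hmeas : ∀ k, AEMeasurable (f k) ℙ := by
    rintro (⟨i, m⟩ | i)
    · refine aemeasurable_of_map_neZero ⟨?_⟩
      show Measure.map (fun ω => w i ω m) ℙ ≠ 0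
      rw [hw i m]; exact IsProbabilityMeasure.ne_zero _
    · refine aemeasurable_of_map_neZero ⟨?_⟩
      show Measure.map (V i) ℙ ≠ 0
      rw [hV i]; exact IsProbabilityMeasure.ne_zero _
  set g : (ℕ × Fin p) ⊕ ℕ → Ω → ℝ := fun k => (hmeas k).mk (f k) with hg_def
  have hg : ∀ k, Measurable (g k) := fun k => (hmeas k).measurable_mk
  have heq : ∀ k, f k =ᵐ[ℙ] g k := fun k => (hmeas k).ae_eq_mk
  have hindep' : iIndepFun g ℙ := iIndepFun_ae_congr heq hindep
  have hlaw : ∀ k, Measure.map (g k) ℙ = gaussianReal 0 v := by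
    rintro (⟨i, m⟩ | i)
    · rw [← Measure.map_congr (heq (Sum.inl (i, m)))]
      exact hw i m
    · rw [← Measure.map_congr (heq (Sum.inr i))]
      exact hV i
  have hInt : ∀ k, Integrable (g k) ℙ := by
    intro k
    have h := integrable_id_gaussianReal' hv
    rw [← hlaw k] at h
    exact (integrable_map_measure aestronglyMeasurable_id (hg k).aemeasurable).1 h
  have hMean : ∀ k, ∫ ω, g k ω ∂ℙ = 0 := by
    intro k
    have h := integral_map (μ := ℙ) (φ := g k) (hg k).aemeasurable
      (f := fun x : ℝ => x) aestronglyMeasurable_id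
    rw [hlaw k, integral_id_gaussianReal' v] at h
    exact h.symm
  -- coordinatewise strong law of large numbers
  have key : ∀ m : Fin p, ∀ᵐ ω ∂ℙ, Tendsto
      (fun N : ℕ =>
        (∑ i ∈ Finset.range N, max (g (Sum.inr i) ω) 0 * g (Sum.inl (i, m)) ω) / N)
      atTop (𝓝 0) := by
    intro m
    set X : ℕ → Ω → ℝ := fun i ω => max (g (Sum.inr i) ω) 0 * g (Sum.inl (i, m)) ω
      with hX_def
    have hφ : Measurable (fun q : ℝ × ℝ => max q.1 0 * q.2) :=
      (measurable_fst.max measurable_const).mul measurable_snd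
    have hpair : ∀ i, IndepFun (g (Sum.inr i)) (g (Sum.inl (i, m))) ℙ :=
      fun i => hindep'.indepFun (by simp)
    have hmaxindep : ∀ i,
        IndepFun (fun ω => max (g (Sum.inr i) ω) 0) (g (Sum.inl (i, m))) ℙ :=
      fun i => (hpair i).comp (measurable_id.max measurable_const) measurable_id
    have hint : Integrable (X 0) ℙ :=
      (hmaxindep 0).integrable_mul (hInt _).pos_part (hInt _)
    have hindepX : Pairwise (Function.onFun (IndepFun · · ℙ) X) := by
      intro i j hij
      have h1 := hindep'.indepFun_prodMk_prodMk hg (Sum.inr i) (Sum.inl (i, m))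
        (Sum.inr j) (Sum.inl (j, m)) (by simp [hij]) (by simp) (by simp) (by simp [hij])
      exact h1.comp hφ hφ
    have hpairlaw : ∀ i,
        Measure.map (fun ω => (g (Sum.inr i) ω, g (Sum.inl (i, m)) ω)) ℙ
          = (gaussianReal 0 v).prod (gaussianReal 0 v) := by
      intro i
      refine ((indepFun_iff_map_prod_eq_prod_map_map
        (hg _).aemeasurable (hg _).aemeasurable).1 (hpair i)).trans ?_
      rw [hlaw (Sum.inr i), hlaw (Sum.inl (i, m))]
    have hident : ∀ i, IdentDistrib (X i) (X 0) ℙ ℙ := by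
      intro i
      have hpid : IdentDistrib (fun ω => (g (Sum.inr i) ω, g (Sum.inl (i, m)) ω))
          (fun ω => (g (Sum.inr 0) ω, g (Sum.inl (0, m)) ω)) ℙ ℙ :=
        ⟨((hg _).prodMk (hg _)).aemeasurable, ((hg _).prodMk (hg _)).aemeasurable,
          by rw [hpairlaw i, hpairlaw 0]⟩
      exact hpid.comp hφ
    have hmean0 : ∫ ω, X 0 ω ∂ℙ = 0 := by
      have h2 : ∫ ω, X 0 ω ∂ℙ = (∫ ω, max (g (Sum.inr 0) ω) 0 ∂ℙ)
          * ∫ ω, g (Sum.inl (0, m)) ω ∂ℙ :=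
        (hmaxindep 0).integral_fun_mul_eq_mul_integral
          ((hg _).max measurable_const).aestronglyMeasurable (hg _).aestronglyMeasurable
      rw [h2, hMean (Sum.inl (0, m)), mul_zero]
    have h := strong_law_ae_real X hint hindepX hident
    rw [hmean0] at h
    exact h
  have keyall : ∀ᵐ ω ∂ℙ, ∀ m : Fin p, Tendsto
      (fun N : ℕ =>
        (∑ i ∈ Finset.range N, max (g (Sum.inr i) ω) 0 * g (Sum.inl (i, m)) ω) / N)
      atTop (𝓝 0) := ae_all_iff.2 key
  have hae_all : ∀ᵐ ω ∂ℙ, (∀ i, V i ω = g (Sum.inr i) ω)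
      ∧ ∀ i (m : Fin p), w i ω m = g (Sum.inl (i, m)) ω := by
    refine (ae_all_iff.2 fun i => heq (Sum.inr i)).and ?_
    exact ae_all_iff.2 fun i => ae_all_iff.2 fun m => heq (Sum.inl (i, m))
  filter_upwards [keyall, hae_all] with ω hm hae
  obtain ⟨haeV, haew⟩ := hae
  have h2 : Tendsto (fun N : ℕ => fun m : Fin p =>
      (∑ i ∈ Finset.range N, max (g (Sum.inr i) ω) 0 * g (Sum.inl (i, m)) ω) / N)
      atTop (𝓝 (fun _ => 0)) := tendsto_pi_nhds.2 hm
  have h3 := ((PiLp.continuous_toLp 2 (fun _ : Fin p => ℝ)).tendsto _).comp h2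
  convert h3 using 1
  · funext N
    refine PiLp.ext fun m => ?_

    have hsum : ∀ s : Finset ℕ, (∑ i ∈ s, max (V i ω) 0 • w i ω) m
        = ∑ i ∈ s, max (V i ω) 0 * w i ω m := by
      intro s
      induction s using Finset.cons_induction with
      | empty => simp
      | cons a s ha ih =>
        rw [Finset.sum_cons, Finset.sum_cons, PiLp.add_apply, ih, PiLp.smul_apply,
          smul_eq_mul]
    show ((N : ℝ)⁻¹ • ∑ i ∈ Finset.range N, max (V i ω) 0 • w i ω) m = _
    rw [PiLp.smul_apply, hsum (Finset.range N)]
    simp only [Function.comp_apply, PiLp.toLp_apply, smul_eq_mul]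
    rw [div_eq_inv_mul]
    congr 1
    exact Finset.sum_congr rfl fun i _ => by rw [haeV i, haew i m]
  · rfl
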